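/- Let p ∈ ℤ and q ∈ ℕ* be relatively prime, γ = 2πp/q, ω ∈ ℝ, and P_K(θ₁,θ₂,ω,λ) the characteristic polynomial of the 3q×3q kagome matrix M_K(θ₁,θ₂,ω). Then the function (θ₁,θ₂) ↦ P_K(θ₁ + pπ, θ₂ + pπ, ω, λ) is invariant under the symmetry s(θ₁,θ₂) = (θ₂,θ₁), i.e. P_K(θ₂ + pπ, θ₁ + pπ, ω, λ) = P_K(θ₁ + pπ, θ₂ + pπ, ω, λ) for all (θ₁,θ₂) ∈ ℝ² and λ ∈ ℂ. -/

import Mathlib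

noncomputable section

open Matrix Complex

/-- `J_{p,q}` : the `q × q` diagonal matrix with diagonal entries `e^{i(j-1)γ}`, `j = 1,…,q`,
where `γ = 2πp/q`. -/
def Jmat (p : ℤ) (q : ℕ) : Matrix (Fin q) (Fin q) ℂ :=
  Matrix.diagonal fun j => Complex.exp (Complex.I * ((j : ℕ) : ℂ) *
    ((2 * Real.pi * (p : ℝ) / (q : ℝ) : ℝ) : ℂ))

/-- `K_q` : the `q × q` cyclic shift matrix, `(K_q)_{jk} = 1` if `k ≡ j+1 [q]`, `0` otherwise. -/
def Kmat (q : ℕ) : Matrix (Fin q) (Fin q) ℂ :=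
  Matrix.of fun j k => if ((j : ℕ) + 1) % q = (k : ℕ) then 1 else 0

/-- Block `A(θ₁,θ₂,ω) = e^{i(ω+γ/8)}(e^{-iθ₁}J* + e^{-iγ/2}e^{-i(θ₁-θ₂)}J*K)`. -/
def AK (p : ℤ) (q : ℕ) (θ₁ θ₂ ω : ℝ) : Matrix (Fin q) (Fin q) ℂ :=
  Complex.exp (Complex.I * ((ω + 2 * Real.pi * (p : ℝ) / (q : ℝ) / 8 : ℝ) : ℂ)) •
    (Complex.exp (-(Complex.I) * (θ₁ : ℂ)) • (Jmat p q)ᴴ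
      + (Complex.exp (-(Complex.I) * ((2 * Real.pi * (p : ℝ) / (q : ℝ) / 2 : ℝ) : ℂ)) *
          Complex.exp (-(Complex.I) * ((θ₁ - θ₂ : ℝ) : ℂ))) • ((Jmat p q)ᴴ * Kmat q))

/-- Block `B(θ₁,θ₂,ω) = e^{-i(ω+γ/8)}(e^{-iθ₁}J* + e^{-iθ₂}K*)`. -/
def BK (p : ℤ) (q : ℕ) (θ₁ θ₂ ω : ℝ) : Matrix (Fin q) (Fin q) ℂ :=
  Complex.exp (-(Complex.I) * ((ω + 2 * Real.pi * (p : ℝ) / (q : ℝ) / 8 : ℝ) : ℂ)) •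
    (Complex.exp (-(Complex.I) * (θ₁ : ℂ)) • (Jmat p q)ᴴ
      + Complex.exp (-(Complex.I) * (θ₂ : ℂ)) • (Kmat q)ᴴ)

/-- Block `C(θ₁,θ₂,ω) = e^{i(ω+γ/8)}(e^{-iγ/2}e^{i(θ₁-θ₂)}JK* + e^{-iθ₂}K*)`. -/
def CK (p : ℤ) (q : ℕ) (θ₁ θ₂ ω : ℝ) : Matrix (Fin q) (Fin q) ℂ :=
  Complex.exp (Complex.I * ((ω + 2 * Real.pi * (p : ℝ) / (q : ℝ) / 8 : ℝ) : ℂ)) •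
    ((Complex.exp (-(Complex.I) * ((2 * Real.pi * (p : ℝ) / (q : ℝ) / 2 : ℝ) : ℂ)) *
        Complex.exp (Complex.I * ((θ₁ - θ₂ : ℝ) : ℂ))) • (Jmat p q * (Kmat q)ᴴ)
      + Complex.exp (-(Complex.I) * (θ₂ : ℂ)) • (Kmat q)ᴴ)

/-- The Hou (kagome) matrix : the `3q × 3q` block matrix `[[0,A,B],[A*,0,C],[B*,C*,0]]`,
indexed by `Fin 3 × Fin q` (first component = block index). -/
def MK (p : ℤ) (q : ℕ) (θ₁ θ₂ ω : ℝ) : Matrix (Fin 3 × Fin q) (Fin 3 × Fin q) ℂ :=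
  Matrix.of fun x y =>
    (![![0, AK p q θ₁ θ₂ ω, BK p q θ₁ θ₂ ω],
       ![(AK p q θ₁ θ₂ ω)ᴴ, 0, CK p q θ₁ θ₂ ω],
       ![(BK p q θ₁ θ₂ ω)ᴴ, (CK p q θ₁ θ₂ ω)ᴴ, 0]] x.1 y.1) x.2 y.2

/-- The characteristic polynomial `P_K(θ₁,θ₂,ω,λ) = det(M_K(θ₁,θ₂,ω) - λ I_{3q})`. -/
def PK (p : ℤ) (q : ℕ) (θ₁ θ₂ ω : ℝ) (l : ℂ) : ℂ :=
  Matrix.det (MK p q θ₁ θ₂ ω - l • (1 : Matrix (Fin 3 × Fin q) (Fin 3 × Fin q) ℂ))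


namespace Kag
variable (p : ℤ) (q : ℕ)

/-- scalar `e^{iaγ}` with `γ = 2πp/q`. -/
def ew (a : ℤ) : ℂ := Complex.exp (Complex.I * (a : ℂ) * ((2 * Real.pi * (p : ℝ) / (q : ℝ) : ℝ) : ℂ))

lemma ew_add (a b : ℤ) : ew p q (a + b) = ew p q a * ew p q b := by
  rw [ew, ew, ew, ← Complex.exp_add]; congr 1; push_cast; ring

lemma ew_congr (hq : 0 < q) {a b : ℤ} (h : (a : ZMod q) = (b : ZMod q)) :
    ew p q a = ew p q b := by
  have hd : (q : ℤ) ∣ (b - a) := by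
    rwa [← ZMod.intCast_zmod_eq_zero_iff_dvd, Int.cast_sub, sub_eq_zero, eq_comm]
  obtain ⟨t, ht⟩ := hd
  have hb : b = a + q * t := by linarith
  rw [hb, ew_add]
  have h1 : ew p q (q * t) = 1 := by
    rw [ew]
    have harg : Complex.I * ((q * t : ℤ) : ℂ) * ((2 * Real.pi * (p : ℝ) / (q : ℝ) : ℝ) : ℂ)
        = ((p * t : ℤ) : ℂ) * (2 * Real.pi * Complex.I) := by
      have hqc : (q : ℂ) ≠ 0 := Nat.cast_ne_zero.mpr hq.ne'
      push_cast
      field_simp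
    rw [harg]
    exact_mod_cast Complex.exp_int_mul_two_pi_mul_I (p * t)
  rw [h1, mul_one]

lemma star_ew (a : ℤ) : star (ew p q a) = ew p q (-a) := by
  rw [ew, ew]
  rw [show (star (cexp (Complex.I * (a:ℂ) * ((2 * Real.pi * (p : ℝ) / (q : ℝ) : ℝ) : ℂ))) : ℂ)
      = (starRingEnd ℂ) (cexp (Complex.I * (a:ℂ) * ((2 * Real.pi * (p : ℝ) / (q : ℝ) : ℝ) : ℂ))) from rfl,
    ← Complex.exp_conj]
  congr 1
  rw [_root_.map_mul, _root_.map_mul, Complex.conj_I, Complex.conj_ofReal, map_intCast]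
  push_cast
  ring

lemma ew_pow (a : ℤ) (n : ℕ) : ew p q a ^ n = ew p q (a * n) := by
  rw [ew, ew, ← Complex.exp_nat_mul]; congr 1; push_cast; ring

/-- the DFT / Vandermonde matrix `V_{jk} = ω^{jk}`, `ω = e^{iγ}`. -/
def Vf : Matrix (Fin q) (Fin q) ℂ := Matrix.vandermonde fun j : Fin q => ew p q (j : ℕ)

lemma Vf_apply (j k : Fin q) : Vf p q j k = ew p q ((j : ℕ) * (k : ℕ)) := by
  rw [Vf, Matrix.vandermonde_apply, ew_pow]

lemma Jmat_eq : Jmat p q = Matrix.diagonal fun j : Fin q => ew p q (j : ℕ) := by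
  unfold Jmat ew
  congr 1

lemma JmatH : (Jmat p q)ᴴ = Matrix.diagonal fun j : Fin q => ew p q (-(j : ℕ)) := by
  rw [Jmat_eq, Matrix.diagonal_conjTranspose]
  exact congrArg Matrix.diagonal (funext fun j => star_ew p q ((j : ℕ) : ℤ))

lemma KT : (Kmat q)ᵀ = (Kmat q)ᴴ := by
  ext j k
  rw [Matrix.transpose_apply, Matrix.conjTranspose_apply]
  simp only [Kmat, Matrix.of_apply]
  split_ifs <;> simp

lemma KHT : ((Kmat q)ᴴ)ᵀ = Kmat q := by
  ext j k
  rw [Matrix.transpose_apply, Matrix.conjTranspose_apply]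
  simp only [Kmat, Matrix.of_apply]
  split_ifs <;> simp

lemma JT : (Jmat p q)ᵀ = Jmat p q := by
  rw [Jmat, Matrix.diagonal_transpose]

lemma JHT : ((Jmat p q)ᴴ)ᵀ = (Jmat p q)ᴴ := by
  rw [Jmat, Matrix.diagonal_conjTranspose, Matrix.diagonal_transpose]

lemma expd (a b : ℝ) :
    cexp (-(Complex.I) * ((a - b : ℝ) : ℂ)) = cexp (Complex.I * ((b - a : ℝ) : ℂ)) := by
  congr 1; push_cast; ring

section FinHelp
variable [NeZero q]

lemma val_add_one (j : Fin q) : ((j + 1 : Fin q) : ℕ) = ((j : ℕ) + 1) % q := by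
  rw [Fin.val_add, Fin.val_one']
  conv_rhs => rw [Nat.add_mod, Nat.mod_eq_of_lt j.isLt]

lemma zq_add_one (k : Fin q) : (((k + 1 : Fin q) : ℕ) : ZMod q) = ((k : ℕ) : ZMod q) + 1 := by
  rw [val_add_one, ZMod.natCast_mod]
  push_cast
  ring

lemma zq_sub_one (k : Fin q) : (((k - 1 : Fin q) : ℕ) : ZMod q) = ((k : ℕ) : ZMod q) - 1 := by
  rw [Fin.coe_sub, ZMod.natCast_mod]
  have h1 : (1 : Fin q).val ≤ q := le_of_lt (Fin.is_lt _)
  push_cast [Nat.cast_sub h1]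
  have h2 : (((1 : Fin q) : ℕ) : ZMod q) = 1 := by rw [Fin.val_one', ZMod.natCast_mod, Nat.cast_one]
  rw [h2, ZMod.natCast_self]
  ring

lemma Kmat_apply (j k : Fin q) : Kmat q j k = if j + 1 = k then 1 else 0 := by
  have h : (((j : ℕ) + 1) % q = (k : ℕ)) ↔ (j + 1 = k) := by
    rw [Fin.ext_iff, val_add_one]
  simp only [Kmat, Matrix.of_apply]
  simp only [h]

lemma KmatH_apply (j k : Fin q) : (Kmat q)ᴴ j k = if j = k + 1 then 1 else 0 := by
  rw [Matrix.conjTranspose_apply, Kmat_apply]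
  split_ifs with h1 h2 h2 <;> simp_all [eq_comm]

lemma mul_K (X : Matrix (Fin q) (Fin q) ℂ) (j k : Fin q) :
    (X * Kmat q) j k = X j (k - 1) := by
  rw [Matrix.mul_apply]
  simp_rw [Kmat_apply, mul_ite, mul_one, mul_zero,
    show ∀ m : Fin q, (m + 1 = k) ↔ (m = k - 1) from fun m => by
      constructor <;> intro h <;> [exact eq_sub_of_add_eq h; rw [h, sub_add_cancel]]]
  rw [Finset.sum_ite_eq' Finset.univ (k - 1) (fun m => X j m)]
  simp

lemma K_mul (X : Matrix (Fin q) (Fin q) ℂ) (j k : Fin q) :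
    (Kmat q * X) j k = X (j + 1) k := by
  rw [Matrix.mul_apply]
  simp_rw [Kmat_apply, ite_mul, one_mul, zero_mul]
  rw [Finset.sum_ite_eq Finset.univ (j + 1) (fun m => X m k)]
  simp

lemma mul_KH (X : Matrix (Fin q) (Fin q) ℂ) (j k : Fin q) :
    (X * (Kmat q)ᴴ) j k = X j (k + 1) := by
  rw [Matrix.mul_apply]
  simp_rw [KmatH_apply, mul_ite, mul_one, mul_zero]
  rw [Finset.sum_ite_eq' Finset.univ (k + 1) (fun m => X j m)]
  simp

lemma KH_mul (X : Matrix (Fin q) (Fin q) ℂ) (j k : Fin q) :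
    ((Kmat q)ᴴ * X) j k = X (j - 1) k := by
  rw [Matrix.mul_apply]
  simp_rw [KmatH_apply, ite_mul, one_mul, zero_mul,
    show ∀ m : Fin q, (j = m + 1) ↔ (m = j - 1) from fun m => by
      constructor <;> intro h <;> [exact eq_sub_of_add_eq h.symm; rw [h, sub_add_cancel]]]
  rw [Finset.sum_ite_eq' Finset.univ (j - 1) (fun m => X m k)]
  simp

lemma R1 : (Jmat p q)ᴴ * Vf p q = Vf p q * Kmat q := by
  ext j k
  rw [mul_K, JmatH, Matrix.diagonal_mul, Vf_apply, Vf_apply, ← ew_add]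
  apply ew_congr p q (Nat.pos_of_ne_zero (NeZero.ne q))
  push_cast
  rw [zq_sub_one]
  ring

lemma R2 : (Kmat q)ᴴ * Vf p q = Vf p q * (Jmat p q)ᴴ := by
  ext j k
  rw [KH_mul, JmatH, Matrix.mul_diagonal, Vf_apply, Vf_apply, ← ew_add]
  apply ew_congr p q (Nat.pos_of_ne_zero (NeZero.ne q))
  push_cast
  rw [zq_sub_one]
  ring

lemma R3 : Kmat q * Vf p q = Vf p q * Jmat p q := by
  ext j k
  rw [K_mul, Jmat_eq, Matrix.mul_diagonal, Vf_apply, Vf_apply, ← ew_add]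
  apply ew_congr p q (Nat.pos_of_ne_zero (NeZero.ne q))
  push_cast
  rw [zq_add_one]
  ring

lemma R4 : Jmat p q * Vf p q = Vf p q * (Kmat q)ᴴ := by
  ext j k
  rw [mul_KH, Jmat_eq, Matrix.diagonal_mul, Vf_apply, Vf_apply, ← ew_add]
  apply ew_congr p q (Nat.pos_of_ne_zero (NeZero.ne q))
  push_cast
  rw [zq_add_one]
  ring

lemma R5 : (Jmat p q)ᴴ * Kmat q * Vf p q = Vf p q * (Kmat q * Jmat p q) := by
  rw [Matrix.mul_assoc, R3 p q, ← Matrix.mul_assoc, R1 p q, Matrix.mul_assoc]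

lemma R6 : Jmat p q * (Kmat q)ᴴ * Vf p q = Vf p q * ((Kmat q)ᴴ * (Jmat p q)ᴴ) := by
  rw [Matrix.mul_assoc, R2 p q, ← Matrix.mul_assoc, R4 p q, Matrix.mul_assoc]

lemma R7 : (Kmat q)ᴴ * Jmat p q * Vf p q = Vf p q * ((Jmat p q)ᴴ * (Kmat q)ᴴ) := by
  rw [Matrix.mul_assoc, R4 p q, ← Matrix.mul_assoc, R2 p q, Matrix.mul_assoc]

lemma R8 : Kmat q * (Jmat p q)ᴴ * Vf p q = Vf p q * (Jmat p q * Kmat q) := by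
  rw [Matrix.mul_assoc, R1 p q, ← Matrix.mul_assoc, R3 p q, Matrix.mul_assoc]

variable (a b w : ℝ)

lemma E11 : BK p q a b w * Vf p q = Vf p q * (BK p q b a w)ᵀ := by
  simp only [BK, Matrix.transpose_smul, Matrix.transpose_add, JHT, KHT,
    Matrix.smul_mul, Matrix.add_mul, Matrix.mul_smul, Matrix.mul_add, R1, R2]
  module

lemma E12 : AK p q a b w * Vf p q = Vf p q * (CK p q b a w)ᵀ := by
  simp only [AK, CK, Matrix.transpose_smul, Matrix.transpose_add, Matrix.transpose_mul,
    JHT, KHT, JT, KT, expd,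
    Matrix.smul_mul, Matrix.add_mul, Matrix.mul_smul, Matrix.mul_add, R1, R5]
  module

lemma E21 : CK p q a b w * Vf p q = Vf p q * (AK p q b a w)ᵀ := by
  simp only [AK, CK, Matrix.transpose_smul, Matrix.transpose_add, Matrix.transpose_mul,
    JHT, KHT, JT, KT, expd,
    Matrix.smul_mul, Matrix.add_mul, Matrix.mul_smul, Matrix.mul_add, R2, R6]
  module

lemma E33 : (BK p q a b w)ᴴ * Vf p q = Vf p q * ((BK p q b a w)ᴴ)ᵀ := by
  simp only [BK, Matrix.conjTranspose_smul, Matrix.conjTranspose_add,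
    Matrix.conjTranspose_conjTranspose,
    Matrix.transpose_smul, Matrix.transpose_add, JT, KT, KHT,
    Matrix.smul_mul, Matrix.add_mul, Matrix.mul_smul, Matrix.mul_add, R3, R4]
  module

lemma E23 : (AK p q a b w)ᴴ * Vf p q = Vf p q * ((CK p q b a w)ᴴ)ᵀ := by
  simp only [AK, CK, Matrix.conjTranspose_smul, Matrix.conjTranspose_add,
    Matrix.conjTranspose_mul, Matrix.conjTranspose_conjTranspose,
    Matrix.transpose_smul, Matrix.transpose_add, Matrix.transpose_mul, JT, JHT, KT, KHT, expd,
    Matrix.smul_mul, Matrix.add_mul, Matrix.mul_smul, Matrix.mul_add, R4, R7]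
  module

lemma E32 : (CK p q a b w)ᴴ * Vf p q = Vf p q * ((AK p q b a w)ᴴ)ᵀ := by
  simp only [AK, CK, Matrix.conjTranspose_smul, Matrix.conjTranspose_add,
    Matrix.conjTranspose_mul, Matrix.conjTranspose_conjTranspose,
    Matrix.transpose_smul, Matrix.transpose_add, Matrix.transpose_mul, JT, JHT, KT, KHT, expd,
    Matrix.smul_mul, Matrix.add_mul, Matrix.mul_smul, Matrix.mul_add, R3, R8]
  module

end FinHelp

open Kronecker

/-- the block permutation matrix swapping blocks 1 and 3. -/
def Pm : Matrix (Fin 3) (Fin 3) ℂ := Matrix.of ![![0,0,1],![0,1,0],![1,0,0]]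

/-- the intertwining matrix `U = P ⊗ V`. -/
def UU (p : ℤ) (q : ℕ) : Matrix (Fin 3 × Fin q) (Fin 3 × Fin q) ℂ := Pm ⊗ₖ Vf p q

section Main
variable [NeZero q] (a b w : ℝ)

set_option maxHeartbeats 1000000 in
lemma hMU : MK p q a b w * UU p q = UU p q * (MK p q b a w)ᵀ := by
  ext ⟨x1, x2⟩ ⟨y1, y2⟩
  rw [Matrix.mul_apply, Matrix.mul_apply, Fintype.sum_prod_type, Fintype.sum_prod_type]
  have hE11 := Matrix.ext_iff.mpr (E11 p q a b w)
  have hE12 := Matrix.ext_iff.mpr (E12 p q a b w)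
  have hE21 := Matrix.ext_iff.mpr (E21 p q a b w)
  have hE23 := Matrix.ext_iff.mpr (E23 p q a b w)
  have hE32 := Matrix.ext_iff.mpr (E32 p q a b w)
  have hE33 := Matrix.ext_iff.mpr (E33 p q a b w)
  simp only [Matrix.mul_apply, Matrix.transpose_apply] at hE11 hE12 hE21 hE23 hE32 hE33
  have hmk2 : (⟨2, by norm_num⟩ : Fin 3) = (2 : Fin 3) := rfl
  fin_cases x1 <;> fin_cases y1 <;>
    simp only [MK, UU, Pm, Fin.mk_zero, Fin.mk_one, hmk2, Matrix.kroneckerMap_apply,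
      Matrix.of_apply, Matrix.transpose_apply, Fin.sum_univ_three,
      Matrix.cons_val_zero, Matrix.cons_val_one, Matrix.cons_val_two,
      Matrix.head_cons, Matrix.tail_cons, Matrix.cons_val', Matrix.head_fin_const,
      Matrix.zero_apply, mul_zero, zero_mul, mul_one, one_mul,
      Finset.sum_const_zero, add_zero, zero_add] <;>
    first
      | rfl
      | exact hE11 x2 y2
      | exact hE12 x2 y2
      | exact hE21 x2 y2
      | exact hE23 x2 y2
      | exact hE32 x2 y2
      | exact hE33 x2 y2

end Main

lemma ew_key (hq : 0 < q) (hpq : Int.gcd p (q : ℤ) = 1) {i j : Fin q}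
    (h : (i : ℕ) ≤ (j : ℕ)) (hij : ew p q (i : ℕ) = ew p q (j : ℕ)) : i = j := by
  set d : ℤ := (j : ℕ) - (i : ℕ) with hd
  have hdnn : 0 ≤ d := by simp only [hd, sub_nonneg]; exact_mod_cast h
  have hdlt : d < q := by
    have := j.isLt
    omega
  have hsplit : ((j : ℕ) : ℤ) = (i : ℕ) + d := by omega
  have h1 : ew p q ((i : ℕ)) * ew p q d = ew p q ((i:ℕ)) * 1 := by
    rw [← ew_add, mul_one, ← hsplit, hij]
  have hne : ew p q ((i : ℕ)) ≠ 0 := Complex.exp_ne_zero _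
  have h2 : ew p q d = 1 := mul_left_cancel₀ hne h1
  rw [ew, Complex.exp_eq_one_iff] at h2
  obtain ⟨n, hn⟩ := h2
  have h3 : ((d : ℂ)) * (((2 * Real.pi * (p : ℝ) / (q : ℝ) : ℝ)) : ℂ)
      = (n : ℂ) * (2 * Real.pi) := by
    apply mul_left_cancel₀ Complex.I_ne_zero
    rw [← mul_assoc, hn]; ring
  have h4 : (d : ℝ) * (2 * Real.pi * (p : ℝ) / (q : ℝ)) = (n : ℝ) * (2 * Real.pi) := by
    exact_mod_cast h3
  have hqR : (q : ℝ) ≠ 0 := Nat.cast_ne_zero.mpr hq.ne'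
  have h5 : (d : ℝ) * (p : ℝ) = (n : ℝ) * (q : ℝ) := by
    field_simp at h4
    nlinarith [Real.pi_ne_zero, Real.pi_pos]
  have h6 : d * p = n * q := by exact_mod_cast h5
  have hdvd : (q : ℤ) ∣ d * p := Dvd.intro n (by linarith)
  have hcop : IsCoprime (q : ℤ) p := (Int.isCoprime_iff_gcd_eq_one.mpr hpq).symm
  have hdvd2 : (q : ℤ) ∣ d := hcop.dvd_of_dvd_mul_right hdvd
  have hd0 : d = 0 := by
    by_contra hdne
    have hpos : 0 < d := lt_of_le_of_ne hdnn (Ne.symm hdne)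
    have := Int.le_of_dvd hpos hdvd2
    omega
  have : (i : ℕ) = (j : ℕ) := by omega
  exact Fin.ext this

lemma ew_injOn (hq : 0 < q) (hpq : Int.gcd p (q : ℤ) = 1) {i j : Fin q}
    (hij : ew p q (i : ℕ) = ew p q (j : ℕ)) : i = j := by
  rcases le_total (i : ℕ) (j : ℕ) with h | h
  · exact ew_key p q hq hpq h hij
  · exact (ew_key p q hq hpq h hij.symm).symm

lemma detVf_ne (hq : 0 < q) (hpq : Int.gcd p (q : ℤ) = 1) : (Vf p q).det ≠ 0 := by
  rw [Vf, Matrix.det_vandermonde]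
  apply Finset.prod_ne_zero_iff.mpr
  intro i _
  apply Finset.prod_ne_zero_iff.mpr
  intro j hj
  rw [Finset.mem_Ioi] at hj
  rw [sub_ne_zero]
  intro hEq
  exact absurd (ew_injOn p q hq hpq hEq.symm) (ne_of_lt hj)

lemma detPm_ne : (Pm).det ≠ 0 := by
  rw [Pm, Matrix.det_fin_three]
  norm_num [Matrix.cons_val_zero, Matrix.cons_val_one, Matrix.head_cons, Matrix.cons_val_two, Matrix.cons_val]

end Kag

theorem stmt_12 (p : ℤ) (q : ℕ) (hq : 0 < q) (hpq : Int.gcd p (q : ℤ) = 1)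
    (ω θ₁ θ₂ : ℝ) (l : ℂ) :
    PK p q (θ₂ + p * Real.pi) (θ₁ + p * Real.pi) ω l =
      PK p q (θ₁ + p * Real.pi) (θ₂ + p * Real.pi) ω l := by
  haveI : NeZero q := ⟨hq.ne'⟩
  -- the symmetry holds for arbitrary arguments; apply it to the shifted ones
  have main : ∀ a b : ℝ, PK p q a b ω l = PK p q b a ω l := by
    intro a b
    rw [PK, PK]
    have key : (MK p q a b ω - l • 1) * Kag.UU p q
        = Kag.UU p q * ((MK p q b a ω)ᵀ - l • 1) := by
      rw [Matrix.sub_mul, Matrix.mul_sub, Kag.hMU p q a b ω,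
        Matrix.smul_mul, Matrix.one_mul, Matrix.mul_smul, Matrix.mul_one]
    have hdet := congrArg Matrix.det key
    rw [Matrix.det_mul, Matrix.det_mul] at hdet
    have hUne : (Kag.UU p q).det ≠ 0 := by
      rw [Kag.UU, Matrix.det_kronecker]
      exact mul_ne_zero (pow_ne_zero _ Kag.detPm_ne) (pow_ne_zero _ (Kag.detVf_ne p q hq hpq))
    have h1 : (MK p q a b ω - l • 1).det = ((MK p q b a ω)ᵀ - l • 1).det := by
      apply mul_right_cancel₀ hUne
      rw [hdet, mul_comm]
    have h2 : ((MK p q b a ω)ᵀ - l • (1 : Matrix (Fin 3 × Fin q) (Fin 3 × Fin q) ℂ))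
        = (MK p q b a ω - l • 1)ᵀ := by
      rw [Matrix.transpose_sub, Matrix.transpose_smul, Matrix.transpose_one]
    rw [h1, h2, Matrix.det_transpose]
  exact main _ _
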